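/- Let μ = (a_1,…,a_n) be a weak composition of n with at least one positive part, and let S_μ be the set of all permutations (words) of the multiset containing a_i copies of i for each i. Then ∑_{m ≥ 0} (∏_{i=1}^{n} C(m+1, a_i)) t^m = (∑_{w ∈ S_μ} t^{n−1−des(w)}) / (1−t)^{n+1} as formal power series. -/

import Mathlib

open Finset PowerSeries

/-- The number of descents of a word given as a list: indices `i` with `l_i > l_{i+1}`. -/
def des (l : List ℕ) : ℕ := (l.zip l.tail).countP (fun p => p.2 < p.1)

lemma lemA : ∀ (n r : ℕ), r ≤ n →
    (PowerSeries.mk fun m => ((m + r).choose n : ℤ)) * (1 - X) ^ (n + 1) = X ^ (n - r) := by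
  intro n
  induction n with
  | zero =>
    intro r hr
    interval_cases r
    simp only [Nat.choose_zero_right, Nat.cast_one, pow_one, Nat.sub_zero, pow_zero]
    ext k
    rcases k with _ | k
    · simp [coeff_zero_eq_constantCoeff]
    · simp [mul_sub, coeff_succ_mul_X, map_sub]
  | succ N ih =>
    intro r hr
    have key : (PowerSeries.mk fun m => ((m + r).choose (N+1) : ℤ)) * (1 - X) =
        PowerSeries.mk fun m => ((r.choose (N+1) : ℤ) * (if m = 0 then 1 else 0)
          + if m = 0 then 0 else (((m-1) + r).choose N : ℤ)) := by
      ext k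
      rcases k with _ | k
      · simp [mul_sub, coeff_zero_eq_constantCoeff, map_sub]
      · simp only [mul_sub, mul_one, map_sub, coeff_mk, coeff_succ_mul_X]
        have : (k + 1 + r).choose (N+1) = (k + r).choose N + (k + r).choose (N+1) := by
          have : k + 1 + r = (k + r) + 1 := by ring
          rw [this, Nat.choose_succ_succ]
        rw [this]
        push_cast
        simp
    have step : (PowerSeries.mk fun m => ((m + r).choose (N+1) : ℤ)) * (1 - X) ^ (N + 2) =
        ((PowerSeries.mk fun m => ((m + r).choose (N+1) : ℤ)) * (1 - X)) * (1 - X) ^ (N + 1) := by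
      ring
    rw [step, key]
    rcases Nat.lt_or_ge r (N+1) with hrN | hrN
    · have h0 : r.choose (N+1) = 0 := Nat.choose_eq_zero_of_lt hrN
      have hX : (PowerSeries.mk fun m => ((r.choose (N+1) : ℤ) * (if m = 0 then 1 else 0)
          + if m = 0 then 0 else (((m-1) + r).choose N : ℤ)))
          = (PowerSeries.mk fun m => (((m) + r).choose N : ℤ)) * X := by
        ext k
        rcases k with _ | k
        · simp [coeff_zero_eq_constantCoeff, h0]
        · simp [coeff_succ_mul_X, h0]
      rw [hX, mul_comm _ X, mul_assoc, ih r (Nat.lt_succ_iff.mp hrN)]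
      rw [← pow_succ']
      congr 1
      omega
    · have hreq : r = N + 1 := le_antisymm hr hrN
      subst hreq
      have hX : (PowerSeries.mk fun m => (((N+1).choose (N+1) : ℤ) * (if m = 0 then 1 else 0)
          + if m = 0 then 0 else (((m-1) + (N+1)).choose N : ℤ)))
          = PowerSeries.mk fun m => ((m + N).choose N : ℤ) := by
        ext k
        rcases k with _ | k
        · simp
        · simp only [coeff_mk, Nat.succ_ne_zero, if_false, zero_add, mul_zero]
          norm_cast
          congr 1
          omega
      rw [hX, ih N le_rfl]
      simp

lemma lemC (k M : ℕ) :
    (univ.filter fun y : Fin k → Fin M => StrictMono y).card = M.choose k := by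
  have hcard : (Finset.powersetCard k (univ : Finset (Fin M))).card = M.choose k := by
    simp [Finset.card_powersetCard]
  rw [← hcard]
  apply Finset.card_bij' (i := fun y _ => Finset.image y univ)
    (j := fun s hs => fun t => s.orderEmbOfFin (by
      simpa using (Finset.mem_powersetCard.mp hs).2) t)
  · intro y hy
    exact (Finset.orderEmbOfFin_unique _ (fun x => Finset.mem_image_of_mem _ (Finset.mem_univ x))
      (Finset.mem_filter.mp hy).2).symm
  · intro s hs
    apply Finset.coe_injective
    rw [Finset.coe_image, Finset.coe_univ, Set.image_univ]
    exact Finset.range_orderEmbOfFin _ _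
  · intro y hy
    have hsm : StrictMono y := (Finset.mem_filter.mp hy).2
    rw [Finset.mem_powersetCard]
    refine ⟨Finset.subset_univ _, ?_⟩
    rw [Finset.card_image_of_injective _ hsm.injective]
    simp
  · intro s hs
    simp only [Finset.mem_filter, Finset.mem_univ, true_and]
    exact (s.orderEmbOfFin _).strictMono

variable {N : ℕ}

/-- number of descents of `w` strictly before position `j` -/
def boostF (w : Fin (N+1) → Fin (N+1)) (j : Fin (N+1)) : ℕ :=
  ((univ.filter fun k : Fin N => w k.succ < w k.castSucc).filter
    fun k : Fin N => (k : ℕ) < (j : ℕ)).card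

lemma boostF_zero (w : Fin (N+1) → Fin (N+1)) : boostF w 0 = 0 := by
  simp [boostF]

lemma boostF_last (w : Fin (N+1) → Fin (N+1)) :
    boostF w (Fin.last N) = (univ.filter fun k : Fin N => w k.succ < w k.castSucc).card := by
  unfold boostF
  rw [Finset.filter_true_of_mem]
  intro k _
  exact k.isLt

lemma boostF_le (w : Fin (N+1) → Fin (N+1)) (j : Fin (N+1)) :
    boostF w j ≤ (univ.filter fun k : Fin N => w k.succ < w k.castSucc).card :=
  Finset.card_filter_le _ _

lemma boostF_succ (w : Fin (N+1) → Fin (N+1)) (k : Fin N) :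
    boostF w k.succ = boostF w k.castSucc + if w k.succ < w k.castSucc then 1 else 0 := by
  unfold boostF
  have hsv : ((k.succ : Fin (N+1)) : ℕ) = (k : ℕ) + 1 := rfl
  have hcv : ((k.castSucc : Fin (N+1)) : ℕ) = (k : ℕ) := rfl
  rw [hsv, hcv]
  by_cases h : w k.succ < w k.castSucc
  · rw [if_pos h]
    have hset : ((univ.filter fun t : Fin N => w t.succ < w t.castSucc).filter
          fun t : Fin N => (t : ℕ) < (k : ℕ) + 1)
        = insert k ((univ.filter fun t : Fin N => w t.succ < w t.castSucc).filter
          fun t : Fin N => (t : ℕ) < (k : ℕ)) := by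
      ext t
      simp only [Finset.mem_insert, Finset.mem_filter, Finset.mem_univ, true_and]
      constructor
      · rintro ⟨hd, hlt⟩
        rcases Nat.lt_or_ge (t : ℕ) (k : ℕ) with h' | h'
        · exact Or.inr ⟨hd, h'⟩
        · exact Or.inl (Fin.ext (by omega))
      · rintro (rfl | ⟨hd, hlt⟩)
        · exact ⟨h, by omega⟩
        · exact ⟨hd, by omega⟩
    rw [hset, Finset.card_insert_of_notMem (by simp)]
  · rw [if_neg h, add_zero]
    congr 1
    ext t
    simp only [Finset.mem_filter, Finset.mem_univ, true_and]
    constructor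
    · rintro ⟨hd, hlt⟩
      refine ⟨hd, ?_⟩
      rcases Nat.lt_or_ge (t : ℕ) (k : ℕ) with h' | h'
      · exact h'
      · exact absurd (Fin.ext (show (t:ℕ) = (k:ℕ) by omega) ▸ hd) h
    · rintro ⟨hd, hlt⟩
      exact ⟨hd, by omega⟩

lemma boost_le_y {M : ℕ} {w : Fin (N+1) → Fin (N+1)} {y : Fin (N+1) → Fin M}
    (hy : StrictMono y) (j : Fin (N+1)) : boostF w j ≤ (y j : ℕ) := by
  induction j using Fin.induction with
  | zero => simp [boostF_zero]
  | succ k ih =>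
    have hlt : (y k.castSucc : ℕ) < (y k.succ : ℕ) := hy (Fin.castSucc_lt_succ (i := k))
    rw [boostF_succ]
    split_ifs <;> omega

lemma y_plus_bound {M : ℕ} {w : Fin (N+1) → Fin (N+1)} {y : Fin (N+1) → Fin M}
    (hy : StrictMono y) (j : Fin (N+1)) :
    (y j : ℕ) + boostF w (Fin.last N) ≤ (y (Fin.last N) : ℕ) + boostF w j := by
  induction j using Fin.reverseInduction with
  | last => omega
  | cast k ih =>
    have hlt : (y k.castSucc : ℕ) < (y k.succ : ℕ) := hy (Fin.castSucc_lt_succ (i := k))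
    rw [boostF_succ] at ih
    split_ifs at ih <;> omega

lemma lemB2 (N m : ℕ) (w : Fin (N+1) → Fin (N+1)) :
    (univ.filter fun x : Fin (N+1) → Fin (m+1) =>
        StrictMono fun j => toLex ((x j, OrderDual.toDual (w j)) :
          Fin (m+1) × (Fin (N+1))ᵒᵈ)).card
      = (m + 1 + (univ.filter fun k : Fin N => w k.succ < w k.castSucc).card).choose (N+1) := by
  set d := (univ.filter fun k : Fin N => w k.succ < w k.castSucc).card with hd
  rw [← lemC (N+1) (m+1+d)]
  apply Finset.card_bij'
    (i := fun x _ => fun j => (⟨(x j : ℕ) + boostF w j,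
      by have := (x j).isLt; have := boostF_le w j; rw [← hd] at *; omega⟩ : Fin (m+1+d)))
    (j := fun y hy => fun j => (⟨(y j : ℕ) - boostF w j, by
      have hsm : StrictMono y := (Finset.mem_filter.mp hy).2
      have h1 := y_plus_bound (w := w) hsm j
      have h2 : (y (Fin.last N) : ℕ) < m + 1 + d := (y (Fin.last N)).isLt
      have h3 := boostF_last w
      rw [← hd] at h3
      omega⟩ : Fin (m+1)))
  · -- left inverse
    intro x hx
    funext j
    apply Fin.ext
    simp
  · -- right inverse
    intro y hy
    have hsm : StrictMono y := (Finset.mem_filter.mp hy).2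
    funext j
    apply Fin.ext
    simp only []
    exact Nat.sub_add_cancel (boost_le_y hsm j)
  · -- i maps into target
    intro x hx
    have hsm := (Finset.mem_filter.mp hx).2
    simp only [Finset.mem_filter, Finset.mem_univ, true_and]
    rw [Fin.strictMono_iff_lt_succ]
    intro k
    have hlex := hsm (Fin.castSucc_lt_succ (i := k))
    rw [Prod.Lex.lt_iff] at hlex
    simp only [ofLex_toLex, OrderDual.toDual_lt_toDual] at hlex
    rw [Fin.lt_def]
    simp only []
    rw [boostF_succ]
    rcases hlex with hlt | ⟨heq, hwlt⟩
    · rw [Fin.lt_def] at hlt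
      split_ifs <;> omega
    · rw [if_pos hwlt]
      have : (x k.castSucc : ℕ) = (x k.succ : ℕ) := congrArg Fin.val heq
      omega
  · -- j maps into target
    intro y hy
    have hsm : StrictMono y := (Finset.mem_filter.mp hy).2
    simp only [Finset.mem_filter, Finset.mem_univ, true_and]
    rw [Fin.strictMono_iff_lt_succ]
    intro k
    rw [Prod.Lex.lt_iff]
    simp only [ofLex_toLex, OrderDual.toDual_lt_toDual]
    have hlt : (y k.castSucc : ℕ) < (y k.succ : ℕ) := hsm (Fin.castSucc_lt_succ (i := k))
    have hb1 := boost_le_y (w := w) hsm k.castSucc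
    have hb2 := boost_le_y (w := w) hsm k.succ
    have hbs := boostF_succ w k
    by_cases hdes : w k.succ < w k.castSucc
    · rw [if_pos hdes] at hbs
      rcases Nat.lt_or_ge ((y k.castSucc : ℕ) - boostF w k.castSucc)
        ((y k.succ : ℕ) - boostF w k.succ) with hxy | hxy
      · left; rw [Fin.lt_def]; exact hxy
      · right
        refine ⟨Fin.ext ?_, hdes⟩
        simp only []
        omega
    · rw [if_neg hdes, add_zero] at hbs
      left
      rw [Fin.lt_def]
      simp only []
      omega


lemma countP_ofFn {α : Type*} (p : α → Bool) : ∀ (k : ℕ) (F : Fin k → α),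
    (List.ofFn F).countP p = (univ.filter fun i => p (F i) = true).card := by
  intro k
  induction k with
  | zero => intro F; simp
  | succ k ih =>
    intro F
    rw [List.ofFn_succ, List.countP_cons, ih]
    rw [Finset.card_filter, Finset.card_filter, Fin.sum_univ_succ]
    omega

lemma zip_tail_ofFn {N : ℕ} (g : Fin (N+1) → ℕ) :
    (List.ofFn g).zip (List.ofFn g).tail
      = List.ofFn (fun k : Fin N => (g k.castSucc, g k.succ)) := by
  have ht : (List.ofFn g).tail = List.ofFn (fun k : Fin N => g k.succ) := by
    rw [List.ofFn_succ]; rfl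
  rw [ht]
  apply List.ext_getElem
  · simp
  · intro i h1 h2
    simp only [List.getElem_zip, List.getElem_ofFn]
    congr 1

lemma des_ofFn {N : ℕ} (w : Fin (N+1) → Fin (N+1)) :
    des (List.ofFn fun i => (w i : ℕ) + 1)
      = (univ.filter fun k : Fin N => w k.succ < w k.castSucc).card := by
  unfold des
  rw [zip_tail_ofFn, countP_ofFn]
  congr 1
  ext k
  simp only [Finset.mem_filter, Finset.mem_univ, true_and, decide_eq_true_eq]
  rw [Fin.lt_def]
  omega

variable {N m : ℕ}

abbrev LL (N m : ℕ) := Lex (Fin (m+1) × (Fin (N+1))ᵒᵈ)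

def Eset (f : Fin (N+1) → Finset (Fin (m+1))) : Finset (LL N m) :=
  (Finset.univ.sigma fun i : Fin (N+1) => f i).image
    (fun p => toLex (p.2, OrderDual.toDual p.1))

lemma mem_Eset {f : Fin (N+1) → Finset (Fin (m+1))} {v : Fin (m+1)} {i : Fin (N+1)} :
    toLex (v, OrderDual.toDual i) ∈ Eset f ↔ v ∈ f i := by
  unfold Eset
  simp only [Finset.mem_image, Finset.mem_sigma, Finset.mem_univ, true_and]
  constructor
  · rintro ⟨⟨i', v'⟩, hmem, heq⟩
    have h := toLex.injective heq
    rw [Prod.mk.injEq] at h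
    obtain ⟨h1, h2⟩ := h
    have h2' : i' = i := OrderDual.toDual.injective h2
    subst h1; subst h2'
    exact hmem
  · intro hv
    exact ⟨⟨i, v⟩, hv, rfl⟩

lemma Eset_inj : Function.Injective
    (fun p : (_ : Fin (N+1)) × Fin (m+1) => (toLex (p.2, OrderDual.toDual p.1) : LL N m)) := by
  rintro ⟨i, v⟩ ⟨i', v'⟩ hpq
  have h := toLex.injective hpq
  rw [Prod.mk.injEq] at h
  obtain ⟨h1, h2⟩ := h
  have h2' : i = i' := OrderDual.toDual.injective h2
  subst h1; subst h2'
  rfl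

lemma card_Eset {a : Fin (N+1) → ℕ} (hsum : ∑ i, a i = N+1)
    {f : Fin (N+1) → Finset (Fin (m+1))} (hf : ∀ i, (f i).card = a i) :
    (Eset f).card = N+1 := by
  unfold Eset
  rw [Finset.card_image_of_injective _ Eset_inj, Finset.card_sigma]
  simp only [hf]
  exact hsum

/-- the word read off from sorting the pairs of `f` -/
def wOf (f : Fin (N+1) → Finset (Fin (m+1))) (h : (Eset f).card = N+1) :
    Fin (N+1) → Fin (N+1) :=
  fun j => OrderDual.ofDual (ofLex ((Eset f).orderEmbOfFin h j)).2

/-- the value sequence read off from sorting the pairs of `f` -/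
def xOf (f : Fin (N+1) → Finset (Fin (m+1))) (h : (Eset f).card = N+1) :
    Fin (N+1) → Fin (m+1) :=
  fun j => (ofLex ((Eset f).orderEmbOfFin h j)).1

lemma gOf_eq (f : Fin (N+1) → Finset (Fin (m+1))) (h : (Eset f).card = N+1) :
    (fun j => toLex ((xOf f h j, OrderDual.toDual (wOf f h j)) :
        Fin (m+1) × (Fin (N+1))ᵒᵈ)) = ⇑((Eset f).orderEmbOfFin h) := rfl

/-- the tuple-of-sets read off from a pair (word, values) -/
def Phi (w : Fin (N+1) → Fin (N+1)) (x : Fin (N+1) → Fin (m+1)) :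
    Fin (N+1) → Finset (Fin (m+1)) :=
  fun v => (univ.filter fun j => w j = v).image x

lemma sm_injOn {w : Fin (N+1) → Fin (N+1)} {x : Fin (N+1) → Fin (m+1)}
    (hsm : StrictMono fun j => toLex ((x j, OrderDual.toDual (w j)) :
      Fin (m+1) × (Fin (N+1))ᵒᵈ)) (v : Fin (N+1)) :
    Set.InjOn x (univ.filter fun j => w j = v : Finset (Fin (N+1))) := by
  intro j hj j' hj' hxx
  simp only [Finset.coe_filter, Set.mem_setOf_eq] at hj hj'
  apply hsm.injective
  simp only []
  rw [hxx, hj.2, hj'.2]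

lemma card_Phi {w : Fin (N+1) → Fin (N+1)} {x : Fin (N+1) → Fin (m+1)}
    (hsm : StrictMono fun j => toLex ((x j, OrderDual.toDual (w j)) :
      Fin (m+1) × (Fin (N+1))ᵒᵈ)) (v : Fin (N+1)) :
    (Phi w x v).card = (univ.filter fun j => w j = v).card :=
  Finset.card_image_of_injOn (sm_injOn hsm v)

lemma mem_Eset_Phi {w : Fin (N+1) → Fin (N+1)} {x : Fin (N+1) → Fin (m+1)} (j : Fin (N+1)) :
    toLex ((x j, OrderDual.toDual (w j)) : Fin (m+1) × (Fin (N+1))ᵒᵈ) ∈ Eset (Phi w x) := by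
  rw [mem_Eset]
  unfold Phi
  exact Finset.mem_image_of_mem x (by simp)

lemma g_eq_sort {w : Fin (N+1) → Fin (N+1)} {x : Fin (N+1) → Fin (m+1)}
    (hsm : StrictMono fun j => toLex ((x j, OrderDual.toDual (w j)) :
      Fin (m+1) × (Fin (N+1))ᵒᵈ))
    {f : Fin (N+1) → Finset (Fin (m+1))} (h : (Eset f).card = N+1)
    (hmem : ∀ j, toLex ((x j, OrderDual.toDual (w j)) :
      Fin (m+1) × (Fin (N+1))ᵒᵈ) ∈ Eset f) :
    (fun j => toLex ((x j, OrderDual.toDual (w j)) : Fin (m+1) × (Fin (N+1))ᵒᵈ))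
      = ⇑((Eset f).orderEmbOfFin h) :=
  Finset.orderEmbOfFin_unique h hmem hsm


lemma Phi_wOf (f : Fin (N+1) → Finset (Fin (m+1))) (h : (Eset f).card = N+1) :
    Phi (wOf f h) (xOf f h) = f := by
  set w := wOf f h
  set x := xOf f h
  have hσ : (fun j => toLex ((x j, OrderDual.toDual (w j)) :
      Fin (m+1) × (Fin (N+1))ᵒᵈ)) = ⇑((Eset f).orderEmbOfFin h) := gOf_eq f h
  funext v
  ext u
  unfold Phi
  simp only [Finset.mem_image, Finset.mem_filter, Finset.mem_univ, true_and]
  have hrange : ∀ e : LL N m, e ∈ Eset f ↔ ∃ j, (Eset f).orderEmbOfFin h j = e := by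
    intro e
    constructor
    · intro he
      have : e ∈ Set.range ⇑((Eset f).orderEmbOfFin h) := by
        rw [Finset.range_orderEmbOfFin]; exact he
      obtain ⟨j, hj⟩ := this
      exact ⟨j, hj⟩
    · rintro ⟨j, rfl⟩
      exact Finset.orderEmbOfFin_mem _ _ _
  rw [← mem_Eset (f := f) (v := u) (i := v), hrange]
  constructor
  · rintro ⟨j, hwj, hxj⟩
    refine ⟨j, ?_⟩
    rw [← congrFun hσ j]
    rw [show w j = v from hwj, show x j = u from hxj]
  · rintro ⟨j, hj⟩
    rw [← congrFun hσ j] at hj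
    have h' := toLex.injective hj
    rw [Prod.mk.injEq] at h'
    exact ⟨j, OrderDual.toDual.injective h'.2, h'.1⟩

lemma lemB (N mm : ℕ) (a : Fin (N+1) → ℕ) (hsum : ∑ i, a i = N+1) :
    ∏ i, (mm+1).choose (a i)
      = ∑ w ∈ univ.filter (fun w : Fin (N+1) → Fin (N+1) =>
            ∀ v, (univ.filter fun i => w i = v).card = a v),
          (mm + 1 + (univ.filter fun k : Fin N => w k.succ < w k.castSucc).card).choose (N+1) := by
  classical
  rw [Finset.sum_congr rfl (fun w _ => (lemB2 N mm w).symm), ← Finset.card_sigma]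
  have hT : (univ.filter fun f : Fin (N+1) → Finset (Fin (mm+1)) => ∀ i, (f i).card = a i)
      = Fintype.piFinset (fun i => Finset.powersetCard (a i) univ) := by
    ext f
    simp [Fintype.mem_piFinset, Finset.mem_powersetCard]
  have hTcard : (univ.filter fun f : Fin (N+1) → Finset (Fin (mm+1)) =>
      ∀ i, (f i).card = a i).card = ∏ i, (mm+1).choose (a i) := by
    rw [hT, Fintype.card_piFinset]
    simp [Finset.card_powersetCard]
  rw [← hTcard]
  refine Finset.card_bij'
    (fun f hf => (⟨wOf f (card_Eset hsum (Finset.mem_filter.mp hf).2),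
        xOf f (card_Eset hsum (Finset.mem_filter.mp hf).2)⟩ :
        (_ : Fin (N+1) → Fin (N+1)) × (Fin (N+1) → Fin (mm+1))))
    (fun p _ => Phi p.1 p.2) ?hi ?hj ?left ?right
  case left =>
    intro f hf
    exact Phi_wOf f _
  case right => -- right inverse : Psi (Phi p) = p
    rintro ⟨w, x⟩ hp
    rw [Finset.mem_sigma] at hp
    obtain ⟨hw, hx⟩ := hp
    have hsm : StrictMono fun j => toLex ((x j, OrderDual.toDual (w j)) :
        Fin (mm+1) × (Fin (N+1))ᵒᵈ) := (Finset.mem_filter.mp hx).2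
    have hwm : ∀ v, (univ.filter fun i => w i = v).card = a v := (Finset.mem_filter.mp hw).2
    have hfib : ∀ v, (Phi w x v).card = a v := fun v => (card_Phi hsm v).trans (hwm v)
    have h : (Eset (Phi w x)).card = N+1 := card_Eset hsum hfib
    have huniq := g_eq_sort hsm h (fun j => mem_Eset_Phi j)
    have hkey : ∀ j, toLex ((x j, OrderDual.toDual (w j)) : Fin (mm+1) × (Fin (N+1))ᵒᵈ)
        = toLex ((xOf (Phi w x) h j, OrderDual.toDual (wOf (Phi w x) h j)) :
          Fin (mm+1) × (Fin (N+1))ᵒᵈ) := by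
      intro j
      rw [congrFun huniq j, congrFun (gOf_eq (Phi w x) h) j]
    have hxeq : xOf (Phi w x) h = x := by
      funext j
      have h' := toLex.injective (hkey j)
      exact (congrArg Prod.fst h').symm
    have hweq : wOf (Phi w x) h = w := by
      funext j
      have h' := toLex.injective (hkey j)
      exact (OrderDual.toDual.injective (congrArg Prod.snd h')).symm
    exact Sigma.ext hweq (heq_of_eq hxeq)
  case hi => -- i maps into sigma
    intro f hf
    set h := card_Eset hsum (Finset.mem_filter.mp hf).2 with hh
    set w := wOf f h with hwdef
    set x := xOf f h with hxdef
    have hσ : (fun j => toLex ((x j, OrderDual.toDual (w j)) :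
        Fin (mm+1) × (Fin (N+1))ᵒᵈ)) = ⇑((Eset f).orderEmbOfFin h) := gOf_eq f h
    have hsm : StrictMono fun j => toLex ((x j, OrderDual.toDual (w j)) :
        Fin (mm+1) × (Fin (N+1))ᵒᵈ) := by
      rw [hσ]; exact ((Eset f).orderEmbOfFin h).strictMono
    rw [Finset.mem_sigma]
    constructor
    · -- w has the right fiber cardinalities
      rw [Finset.mem_filter]
      refine ⟨Finset.mem_univ _, fun v => ?_⟩
      have hPhi := Phi_wOf f h
      calc (univ.filter fun j => w j = v).card
          = (Phi w x v).card := (card_Phi hsm v).symm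
        _ = (f v).card := by rw [hPhi]
        _ = a v := (Finset.mem_filter.mp hf).2 v
    · rw [Finset.mem_filter]
      exact ⟨Finset.mem_univ _, hsm⟩
  case hj => -- j maps into Tset
    rintro ⟨w, x⟩ hp
    rw [Finset.mem_sigma] at hp
    obtain ⟨hw, hx⟩ := hp
    have hsm : StrictMono fun j => toLex ((x j, OrderDual.toDual (w j)) :
        Fin (mm+1) × (Fin (N+1))ᵒᵈ) := (Finset.mem_filter.mp hx).2
    have hwm : ∀ v, (univ.filter fun i => w i = v).card = a v := (Finset.mem_filter.mp hw).2
    rw [Finset.mem_filter]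
    exact ⟨Finset.mem_univ _, fun v => (card_Phi hsm v).trans (hwm v)⟩

theorem stmt_13 (n : ℕ) (hn : 0 < n) (a : Fin n → ℕ)
    (hsum : ∑ i, a i = n) (hpos : ∃ i, 0 < a i) :
    (PowerSeries.mk fun m => ∏ i, ((m + 1).choose (a i) : ℤ)) *
        (1 - PowerSeries.X) ^ (n + 1) =
      ∑ w ∈ Finset.univ.filter
          (fun w : Fin n → Fin n =>
            ∀ v : Fin n, (Finset.univ.filter (fun i => w i = v)).card = a v),
        (PowerSeries.X : PowerSeries ℤ) ^ (n - 1 - des (List.ofFn fun i => (w i : ℕ) + 1)) := by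
  obtain ⟨N, rfl⟩ : ∃ N, n = N + 1 := ⟨n - 1, by omega⟩
  have hmk : (PowerSeries.mk fun m => ∏ i, ((m + 1).choose (a i) : ℤ))
      = ∑ w ∈ Finset.univ.filter
          (fun w : Fin (N+1) → Fin (N+1) =>
            ∀ v : Fin (N+1), (Finset.univ.filter (fun i => w i = v)).card = a v),
          PowerSeries.mk (fun m =>
            (((m + (1 + (univ.filter fun k : Fin N =>
              w k.succ < w k.castSucc).card)).choose (N+1) : ℤ))) := by
    ext k
    rw [map_sum]
    simp only [coeff_mk]
    have hB := lemB N k a hsum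
    simp only [← add_assoc]
    exact_mod_cast hB
  rw [hmk, Finset.sum_mul]
  apply Finset.sum_congr rfl
  intro w hw
  have hdle : (univ.filter fun k : Fin N => w k.succ < w k.castSucc).card ≤ N := by
    have := Finset.card_filter_le (univ : Finset (Fin N))
      (fun k : Fin N => w k.succ < w k.castSucc)
    simpa using this
  rw [lemA (N+1) (1 + (univ.filter fun k : Fin N => w k.succ < w k.castSucc).card) (by omega)]
  congr 1
  rw [des_ofFn w]
  omega
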